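/- The function f : ℝ^m → ℝ defined by f(s) = G(exp(s_1), …, exp(s_m)) is strictly convex on ℝ^m. -/

import Mathlib

open Finset

lemma clm_pi_expand {m : ℕ} {F : Type*} [NormedAddCommGroup F] [NormedSpace ℝ F]
    (L : (Fin m → ℝ) →L[ℝ] F) (v : Fin m → ℝ) :
    L v = ∑ i, v i • L (Pi.single i 1) := by
  have hv : v = ∑ i : Fin m, v i • (Pi.single i 1 : Fin m → ℝ) := by
    ext j
    simp [Finset.sum_apply, Pi.single_apply, mul_ite]
  conv_lhs => rw [hv]
  rw [map_sum]
  simp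

lemma gev_quad_nonneg {m : ℕ} (B : Fin m → Fin m → ℝ) (Y d : Fin m → ℝ)
    (hsym : ∀ i j, B i j = B j i)
    (hrow : ∀ i, ∑ j, Y j * B i j = 0)
    (hoff : ∀ i j, i ≠ j → B i j ≤ 0)
    (hY : ∀ i, 0 ≤ Y i) :
    0 ≤ ∑ i, ∑ j, B i j * (Y i * d i) * (Y j * d j) := by
  have e1 : ∑ i, ∑ j, B i j * Y i * Y j * d i ^ 2 = 0 := by
    have h : ∀ i ∈ Finset.univ, ∑ j, B i j * Y i * Y j * d i ^ 2
        = (Y i * d i ^ 2) * ∑ j, Y j * B i j := by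
      intro i _
      rw [Finset.mul_sum]
      exact Finset.sum_congr rfl fun j _ => by ring
    rw [Finset.sum_congr rfl h]
    simp [hrow]
  have e2 : ∑ i, ∑ j, B i j * Y i * Y j * d j ^ 2 = 0 := by
    rw [Finset.sum_comm]
    have h : ∀ j ∈ Finset.univ, ∑ i, B i j * Y i * Y j * d j ^ 2
        = (Y j * d j ^ 2) * ∑ i, Y i * B j i := by
      intro j _
      rw [Finset.mul_sum]
      exact Finset.sum_congr rfl fun i _ => by rw [hsym i j]; ring
    rw [Finset.sum_congr rfl h]
    simp [hrow]
  have hT : ∑ i, ∑ j, B i j * Y i * Y j * (d i - d j) ^ 2 ≤ 0 := by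
    apply Finset.sum_nonpos; intro i _
    apply Finset.sum_nonpos; intro j _
    rcases eq_or_ne i j with rfl | hij
    · simp
    · have h1 := hoff i j hij
      have h2 := hY i; have h3 := hY j
      have : 0 ≤ Y i * Y j * (d i - d j) ^ 2 := by positivity
      nlinarith
  have hexp : ∑ i, ∑ j, B i j * Y i * Y j * (d i - d j) ^ 2
      = -2 * ∑ i, ∑ j, B i j * (Y i * d i) * (Y j * d j) := by
    have expand : ∀ i j : Fin m, B i j * Y i * Y j * (d i - d j) ^ 2
        = B i j * Y i * Y j * d i ^ 2 + B i j * Y i * Y j * d j ^ 2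
          + (-2) * (B i j * (Y i * d i) * (Y j * d j)) := fun i j => by ring
    simp_rw [expand, Finset.sum_add_distrib, ← Finset.mul_sum]
    rw [e1, e2]
    ring
  linarith

theorem stmt_0
    (m : ℕ) (hm : 1 ≤ m)
    (G : (Fin m → ℝ) → ℝ)
    (hGnonneg : ∀ Y : Fin m → ℝ, (∀ i, 0 < Y i) → 0 ≤ G Y)
    (hGsmooth : ContDiffOn ℝ 2 G {Y : Fin m → ℝ | ∀ i, 0 < Y i})
    (hGhom : ∀ lam : ℝ, 0 < lam → ∀ Y : Fin m → ℝ, (∀ i, 0 < Y i) →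
      G (lam • Y) = lam * G Y)
    (hGd1 : ∀ Y : Fin m → ℝ, (∀ i, 0 < Y i) → ∀ i : Fin m,
      0 < fderiv ℝ G Y (Pi.single i 1))
    (hGd2 : ∀ Y : Fin m → ℝ, (∀ i, 0 < Y i) → ∀ i j : Fin m, i ≠ j →
      fderiv ℝ (fun W => fderiv ℝ G W (Pi.single i 1)) Y (Pi.single j 1) ≤ 0) :
    StrictConvexOn ℝ (Set.univ : Set (Fin m → ℝ))
      (fun s : Fin m → ℝ => G fun i => Real.exp (s i)) := by
  classical
  set S : Set (Fin m → ℝ) := {Y : Fin m → ℝ | ∀ i, 0 < Y i} with hSdef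
  have hSopen : IsOpen S := by
    have : S = Set.pi Set.univ (fun _ : Fin m => Set.Ioi (0:ℝ)) := by
      ext Y; simp [hSdef, Set.mem_pi]
    rw [this]
    exact isOpen_set_pi Set.finite_univ (fun i _ => isOpen_Ioi)
  have hCD : ∀ Y ∈ S, ContDiffAt ℝ 2 G Y := fun Y hY =>
    hGsmooth.contDiffAt (hSopen.mem_nhds hY)
  have hdG : ∀ Y ∈ S, DifferentiableAt ℝ G Y := fun Y hY =>
    (hCD Y hY).differentiableAt (by norm_num)
  have hdF : ∀ Y ∈ S, DifferentiableAt ℝ (fderiv ℝ G) Y := fun Y hY =>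
    ((hCD Y hY).fderiv_right (m := 1) (by norm_num)).differentiableAt (by norm_num)
  -- first and second partials
  set G1 : (Fin m → ℝ) → Fin m → ℝ := fun Y i => fderiv ℝ G Y (Pi.single i 1) with hG1def
  set G2 : (Fin m → ℝ) → Fin m → Fin m → ℝ :=
    fun Y i j => fderiv ℝ (fderiv ℝ G) Y (Pi.single j 1) (Pi.single i 1) with hG2def
  -- derivative of the partial maps
  have hG1HasF : ∀ Y ∈ S, ∀ i : Fin m,
      HasFDerivAt (fun W => fderiv ℝ G W (Pi.single i 1))
        ((ContinuousLinearMap.apply ℝ ℝ (Pi.single i 1 : Fin m → ℝ)).comp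
          (fderiv ℝ (fderiv ℝ G) Y)) Y := by
    intro Y hY i
    exact (ContinuousLinearMap.apply ℝ ℝ (Pi.single i 1 : Fin m → ℝ)).hasFDerivAt.comp Y
      (hdF Y hY).hasFDerivAt
  have hG2eq : ∀ Y ∈ S, ∀ i j : Fin m,
      fderiv ℝ (fun W => fderiv ℝ G W (Pi.single i 1)) Y (Pi.single j 1) = G2 Y i j := by
    intro Y hY i j
    rw [(hG1HasF Y hY i).fderiv]
    rfl
  have hsym : ∀ Y ∈ S, ∀ i j : Fin m, G2 Y i j = G2 Y j i := by
    intro Y hY i j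
    exact ((hCD Y hY).isSymmSndFDerivAt (by simp)).eq _ _
  have hoff : ∀ Y ∈ S, ∀ i j : Fin m, i ≠ j → G2 Y i j ≤ 0 := by
    intro Y hY i j hij
    rw [← hG2eq Y hY i j]
    exact hGd2 Y hY i j hij
  have hG1pos : ∀ Y ∈ S, ∀ i : Fin m, 0 < G1 Y i := fun Y hY i => hGd1 Y hY i
  -- homogeneity of degree zero of the gradient
  have hgradhom : ∀ lam : ℝ, 0 < lam → ∀ Y ∈ S, fderiv ℝ G (lam • Y) = fderiv ℝ G Y := by
    intro lam hlam Y hY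
    have hlamY : lam • Y ∈ S := by
      intro i
      simpa using mul_pos hlam (hY i)
    have hsmul : HasFDerivAt (fun W : Fin m → ℝ => lam • W)
        (lam • ContinuousLinearMap.id ℝ (Fin m → ℝ)) Y :=
      (hasFDerivAt_id Y).const_smul lam
    have h1 : HasFDerivAt (fun W => G (lam • W))
        (lam • fderiv ℝ G (lam • Y)) Y := by
      have := ((hdG _ hlamY).hasFDerivAt).comp Y hsmul
      refine this.congr_fderiv ?_
      ext v
      simp
    have h2 : HasFDerivAt (fun W => lam * G W) (lam • fderiv ℝ G Y) Y :=
      (hdG Y hY).hasFDerivAt.const_smul lam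
    have heq : (fun W => G (lam • W)) =ᶠ[nhds Y] fun W => lam * G W := by
      filter_upwards [hSopen.mem_nhds hY] with W hW
      exact hGhom lam hlam W hW
    have := h1.fderiv ▸ h2.fderiv ▸ heq.fderiv_eq
    have hcancel : lam • fderiv ℝ G (lam • Y) = lam • fderiv ℝ G Y := by
      rw [← h1.fderiv, ← h2.fderiv]; exact heq.fderiv_eq
    have := smul_right_injective ((Fin m → ℝ) →L[ℝ] ℝ) (ne_of_gt hlam) hcancel
    exact this
  -- second Euler identity
  have hEuler : ∀ Y ∈ S, ∀ i : Fin m, ∑ j, Y j * G2 Y i j = 0 := by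
    intro Y hY i
    have hline : HasDerivAt (fun lam : ℝ => lam • Y) Y 1 := by
      simpa using (hasDerivAt_id (1:ℝ)).smul_const Y
    have hpt : HasFDerivAt (fun W => fderiv ℝ G W (Pi.single i 1))
        ((ContinuousLinearMap.apply ℝ ℝ (Pi.single i 1 : Fin m → ℝ)).comp
          (fderiv ℝ (fderiv ℝ G) Y)) ((1:ℝ) • Y) := by
      rw [one_smul]; exact hG1HasF Y hY i
    have hcomp : HasDerivAt (fun lam : ℝ => fderiv ℝ G (lam • Y) (Pi.single i 1))
        (fderiv ℝ (fderiv ℝ G) Y Y (Pi.single i 1)) 1 := by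
      have := hpt.comp_hasDerivAt 1 hline
      exact this
    have hconst : (fun lam : ℝ => fderiv ℝ G (lam • Y) (Pi.single i 1))
        =ᶠ[nhds (1:ℝ)] fun _ => fderiv ℝ G Y (Pi.single i 1) := by
      filter_upwards [isOpen_Ioi.mem_nhds (by norm_num : (1:ℝ) ∈ Set.Ioi 0)] with lam hlam
      rw [hgradhom lam hlam Y hY]
    have hzero : fderiv ℝ (fderiv ℝ G) Y Y (Pi.single i 1) = 0 := by
      have h1 := hcomp.deriv
      have h2 : deriv (fun lam : ℝ => fderiv ℝ G (lam • Y) (Pi.single i 1)) 1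
          = deriv (fun _ : ℝ => fderiv ℝ G Y (Pi.single i 1)) 1 := hconst.deriv_eq
      rw [deriv_const] at h2
      rw [h1] at h2
      exact h2
    have hexp : fderiv ℝ (fderiv ℝ G) Y Y (Pi.single i 1)
        = ∑ j, Y j * G2 Y i j := by
      rw [clm_pi_expand (fderiv ℝ (fderiv ℝ G) Y) Y]
      rw [ContinuousLinearMap.sum_apply]
      exact Finset.sum_congr rfl fun j _ => by
        rw [ContinuousLinearMap.smul_apply]; rfl
    rw [← hexp, hzero]
  -- now the main argument
  refine ⟨convex_univ, ?_⟩
  intro x _ y _ hxy a b ha hb hab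
  set d : Fin m → ℝ := fun i => y i - x i with hd
  obtain ⟨k, hk⟩ : ∃ k, d k ≠ 0 := by
    by_contra h
    push_neg at h
    apply hxy
    ext i
    have := h i
    simp only [hd] at this
    linarith
  set φ : ℝ → Fin m → ℝ := fun t i => Real.exp (x i + t * d i) with hφ
  have hφS : ∀ t, φ t ∈ S := fun t i => Real.exp_pos _
  have hφd : ∀ t, HasDerivAt (fun t => φ t) (fun i => φ t i * d i) t := by
    intro t
    rw [hasDerivAt_pi]
    intro i
    have h1 : HasDerivAt (fun t : ℝ => x i + t * d i) (d i) t := by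
      simpa using ((hasDerivAt_id t).mul_const (d i)).const_add (x i)
    simpa [hφ] using h1.exp
  set g : ℝ → ℝ := fun t => G (φ t) with hg
  set g1 : ℝ → ℝ := fun t => ∑ i, (φ t i * d i) * G1 (φ t) i with hg1def
  set g2 : ℝ → ℝ := fun t => ∑ i,
      ((φ t i * d i * d i) * G1 (φ t) i
        + (φ t i * d i) * ∑ j, (φ t j * d j) * G2 (φ t) i j) with hg2def
  have hgd1 : ∀ t, HasDerivAt g (g1 t) t := by
    intro t
    have h := (hdG (φ t) (hφS t)).hasFDerivAt.comp_hasDerivAt t (hφd t)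
    have e : fderiv ℝ G (φ t) (fun i => φ t i * d i) = g1 t := by
      rw [clm_pi_expand]
      exact Finset.sum_congr rfl fun i _ => by rw [smul_eq_mul]
    rw [e] at h
    exact h
  have hgd2 : ∀ t, HasDerivAt g1 (g2 t) t := by
    intro t
    apply HasDerivAt.fun_sum
    intro i _
    have hu : HasDerivAt (fun t => φ t i * d i) (φ t i * d i * d i) t :=
      (hasDerivAt_pi.1 (hφd t) i).mul_const (d i)
    have hv : HasDerivAt (fun t => G1 (φ t) i)
        (∑ j, (φ t j * d j) * G2 (φ t) i j) t := by
      have h := (hG1HasF (φ t) (hφS t) i).comp_hasDerivAt t (hφd t)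
      have e : ((ContinuousLinearMap.apply ℝ ℝ (Pi.single i 1 : Fin m → ℝ)).comp
          (fderiv ℝ (fderiv ℝ G) (φ t))) (fun j => φ t j * d j)
          = ∑ j, (φ t j * d j) * G2 (φ t) i j := by
        have : ((ContinuousLinearMap.apply ℝ ℝ (Pi.single i 1 : Fin m → ℝ)).comp
            (fderiv ℝ (fderiv ℝ G) (φ t))) (fun j => φ t j * d j)
            = fderiv ℝ (fderiv ℝ G) (φ t) (fun j => φ t j * d j) (Pi.single i 1) := rfl
        rw [this, clm_pi_expand (fderiv ℝ (fderiv ℝ G) (φ t)) (fun j => φ t j * d j),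
          ContinuousLinearMap.sum_apply]
        exact Finset.sum_congr rfl fun j _ => by
          rw [ContinuousLinearMap.smul_apply]; rfl
      rw [e] at h
      exact h
    exact hu.fun_mul hv
  have hg2pos : ∀ t, 0 < g2 t := by
    intro t
    rw [hg2def]
    simp only []
    rw [Finset.sum_add_distrib]
    have hA : 0 < ∑ i, (φ t i * d i * d i) * G1 (φ t) i := by
      apply Finset.sum_pos'
      · intro i _
        have h1 := (hG1pos (φ t) (hφS t) i).le
        have h0 := (hφS t i).le
        have e : φ t i * d i * d i * G1 (φ t) i
            = (φ t i * G1 (φ t) i) * (d i * d i) := by ring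
        rw [e]
        exact mul_nonneg (mul_nonneg h0 h1) (mul_self_nonneg _)
      · refine ⟨k, Finset.mem_univ k, ?_⟩
        have h1 := hG1pos (φ t) (hφS t) k
        have h2 := hφS t k
        have h3 : 0 < d k * d k := mul_self_pos.mpr hk
        have e : φ t k * d k * d k * G1 (φ t) k
            = (φ t k * G1 (φ t) k) * (d k * d k) := by ring
        rw [e]
        exact mul_pos (mul_pos h2 h1) h3
    have hQ : 0 ≤ ∑ i, (φ t i * d i) * ∑ j, (φ t j * d j) * G2 (φ t) i j := by
      have := gev_quad_nonneg (G2 (φ t)) (φ t) d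
        (hsym (φ t) (hφS t)) (hEuler (φ t) (hφS t)) (hoff (φ t) (hφS t))
        (fun i => (hφS t i).le)
      calc (0:ℝ) ≤ ∑ i, ∑ j, G2 (φ t) i j * (φ t i * d i) * (φ t j * d j) := this
        _ = ∑ i, (φ t i * d i) * ∑ j, (φ t j * d j) * G2 (φ t) i j := by
            apply Finset.sum_congr rfl
            intro i _
            rw [Finset.mul_sum]
            exact Finset.sum_congr rfl fun j _ => by ring
    linarith
  have hgdiff : Differentiable ℝ g := fun t => (hgd1 t).differentiableAt
  have hstrict : StrictConvexOn ℝ Set.univ g := by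
    apply strictConvexOn_univ_of_deriv2_pos hgdiff.continuous
    intro t
    have hderiv : deriv g = g1 := funext fun t => (hgd1 t).deriv
    show 0 < deriv (deriv g) t
    rw [hderiv, (hgd2 t).deriv]
    exact hg2pos t
  have h01 : (0:ℝ) ≠ 1 := by norm_num
  have key := hstrict.2 (Set.mem_univ (0:ℝ)) (Set.mem_univ (1:ℝ)) h01 ha hb hab
  have eb : a • (0:ℝ) + b • (1:ℝ) = b := by simp
  rw [eb] at key
  have e0 : g 0 = G fun i => Real.exp (x i) := by simp [hg, hφ]
  have e1 : g 1 = G fun i => Real.exp (y i) := by simp [hg, hφ, hd]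
  have ebb : g b = G fun i => Real.exp ((a • x + b • y) i) := by
    show G (φ b) = _
    congr 1
    funext i
    show Real.exp (x i + b * d i) = _
    simp only [hd, Pi.add_apply, Pi.smul_apply, smul_eq_mul]
    congr 1
    have : a = 1 - b := by linarith
    rw [this]; ring
  rw [ebb, e0, e1] at key
  simpa using key
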